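/- Let p_1,…,p_n : ℝ^k → ℝ be L-positively homogeneous (L > 0), differentiable at every nonzero point with locally Lipschitz gradients on ℝ^k \ {0}, let ℓ be the exponential or logistic loss, and let 𝓛(W) = Σ_i ℓ(p_i(W)). For W with 𝓛(W) < ℓ(0) (such W are nonzero), set α(W) = ℓ^{−1}(𝓛(W)) and β(W) = ⟨W, ∇α(W)⟩/L. Then there exists a constant C > 0 such that for every W with 𝓛(W) < ℓ(0): β(W) ≤ C‖W‖^L and ‖∇α(W)‖ ≤ C‖W‖^{L−1}. -/

import Mathlib

open scoped RealInnerProductSpace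

set_option maxHeartbeats 1000000 in
theorem statement_11
    (n k : ℕ) (hn : 0 < n) (L : ℝ) (hL : 0 < L)
    (p : Fin n → EuclideanSpace ℝ (Fin k) → ℝ)
    (hpdiff : ∀ i, ∀ x : EuclideanSpace ℝ (Fin k), x ≠ 0 → DifferentiableAt ℝ (p i) x)
    (hplip : ∀ i, ∀ x : EuclideanSpace ℝ (Fin k), x ≠ 0 →
      ∃ (K : NNReal) (s : Set (EuclideanSpace ℝ (Fin k))),
        s ∈ nhds x ∧ LipschitzOnWith K (gradient (p i)) s)
    (hhom : ∀ i (c : ℝ), 0 < c → ∀ W, p i (c • W) = c ^ L * p i W)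
    (ℓ : ℝ → ℝ)
    (hℓ : ℓ = (fun z => Real.exp (-z)) ∨ ℓ = fun z => Real.log (1 + Real.exp (-z)))
    (𝓛 : EuclideanSpace ℝ (Fin k) → ℝ)
    (h𝓛 : 𝓛 = fun W => ∑ i, ℓ (p i W))
    (α : EuclideanSpace ℝ (Fin k) → ℝ)
    (hα : α = fun W => Function.invFun ℓ (𝓛 W)) :
    ∃ C : ℝ, 0 < C ∧ ∀ W : EuclideanSpace ℝ (Fin k), 𝓛 W < ℓ 0 →
      W ≠ 0 ∧
      ⟪W, gradient α W⟫ / L ≤ C * ‖W‖ ^ L ∧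
      ‖gradient α W‖ ≤ C * ‖W‖ ^ (L - 1) := by
  -- key casework packaging
  obtain ⟨g, gd, ld, hℓpos, hgl, hg, hgd, hld, hbound⟩ :
      ∃ g gd ld : ℝ → ℝ,
        (∀ z : ℝ, 0 < ℓ z) ∧
        (∀ z : ℝ, g (ℓ z) = z) ∧
        (∀ y : ℝ, 0 < y → ℓ (g y) = y) ∧
        (∀ y : ℝ, 0 < y → HasDerivAt g (gd y) y) ∧
        (∀ z : ℝ, HasDerivAt ℓ (ld z) z) ∧
        (∀ t a : ℝ, 0 < t → ℓ a ≤ t → |gd t| * |ld a| ≤ 1) := by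
    rcases hℓ with h | h
    · subst h
      refine ⟨fun y => -Real.log y, fun y => -y⁻¹, fun z => Real.exp (-z) * (-1),
        fun z => Real.exp_pos _, ?_, ?_, ?_, ?_, ?_⟩
      · intro z; simp [Real.log_exp]
      · intro y hy; simp [Real.exp_log hy]
      · intro y hy; exact (Real.hasDerivAt_log hy.ne').neg
      · intro z; exact (Real.hasDerivAt_exp (-z)).comp z (hasDerivAt_neg z)
      · intro t a ht ha
        beta_reduce at ha ⊢
        have h1 : |(-t⁻¹)| = t⁻¹ := by rw [abs_neg, abs_of_pos (inv_pos.mpr ht)]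
        have h2 : |Real.exp (-a) * (-1)| = Real.exp (-a) := by
          rw [mul_neg_one, abs_neg, abs_of_pos (Real.exp_pos _)]
        rw [h1, h2]
        calc t⁻¹ * Real.exp (-a) ≤ t⁻¹ * t :=
              mul_le_mul_of_nonneg_left ha (inv_pos.mpr ht).le
          _ = 1 := inv_mul_cancel₀ ht.ne'
    · subst h
      refine ⟨fun y => -Real.log (Real.exp y - 1),
        fun y => -((Real.exp y - 1)⁻¹ * Real.exp y),
        fun z => (1 + Real.exp (-z))⁻¹ * (Real.exp (-z) * (-1)),
        ?_, ?_, ?_, ?_, ?_, ?_⟩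
      · intro z
        have : (1:ℝ) < 1 + Real.exp (-z) := by linarith [Real.exp_pos (-z)]
        exact Real.log_pos this
      · intro z
        have h1 : (0:ℝ) < 1 + Real.exp (-z) := by positivity
        beta_reduce
        rw [Real.exp_log h1, add_sub_cancel_left, Real.log_exp, neg_neg]
      · intro y hy
        have h1 : (1:ℝ) < Real.exp y := by
          calc (1:ℝ) = Real.exp 0 := Real.exp_zero.symm
          _ < Real.exp y := Real.exp_lt_exp.mpr hy
        have h2 : (0:ℝ) < Real.exp y - 1 := by linarith
        beta_reduce
        rw [neg_neg, Real.exp_log h2,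
          show (1:ℝ) + (Real.exp y - 1) = Real.exp y by ring, Real.log_exp]
      · intro y hy
        have h1 : (1:ℝ) < Real.exp y := by
          calc (1:ℝ) = Real.exp 0 := Real.exp_zero.symm
          _ < Real.exp y := Real.exp_lt_exp.mpr hy
        have h2 : Real.exp y - 1 ≠ 0 := by linarith
        have hinner : HasDerivAt (fun y => Real.exp y - 1) (Real.exp y) y :=
          (Real.hasDerivAt_exp y).sub_const 1
        have := ((Real.hasDerivAt_log h2).comp y hinner).neg
        simpa [Function.comp_def, Pi.neg_def, mul_comm] using this
      · intro z
        have hinner : HasDerivAt (fun z : ℝ => 1 + Real.exp (-z)) (Real.exp (-z) * (-1)) z :=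
          ((Real.hasDerivAt_exp (-z)).comp z (hasDerivAt_neg z)).const_add 1
        have hne : (1:ℝ) + Real.exp (-z) ≠ 0 := by positivity
        have := (Real.hasDerivAt_log hne).comp z hinner
        simpa [Function.comp_def] using this
      · intro t a ht ha
        beta_reduce at ha ⊢
        have hA : (1:ℝ) < Real.exp t := by
          calc (1:ℝ) = Real.exp 0 := Real.exp_zero.symm
          _ < Real.exp t := Real.exp_lt_exp.mpr ht
        have hB : (0:ℝ) < Real.exp (-a) := Real.exp_pos _
        have hBa : (0:ℝ) < 1 + Real.exp (-a) := by linarith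
        have hle : 1 + Real.exp (-a) ≤ Real.exp t := by
          have := Real.exp_le_exp.mpr ha
          rwa [Real.exp_log hBa] at this
        have e1 : |-((Real.exp t - 1)⁻¹ * Real.exp t)| = (Real.exp t - 1)⁻¹ * Real.exp t := by
          rw [abs_neg, abs_of_pos (mul_pos (inv_pos.mpr (by linarith)) (Real.exp_pos _))]
        have e2 : |(1 + Real.exp (-a))⁻¹ * (Real.exp (-a) * (-1))|
            = (1 + Real.exp (-a))⁻¹ * Real.exp (-a) := by
          rw [mul_neg_one, mul_neg, abs_neg, abs_of_pos (by positivity)]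
        rw [e1, e2]
        rw [show (Real.exp t - 1)⁻¹ * Real.exp t * ((1 + Real.exp (-a))⁻¹ * Real.exp (-a))
          = (Real.exp t * Real.exp (-a)) / ((Real.exp t - 1) * (1 + Real.exp (-a))) by
            field_simp]
        rw [div_le_one (by nlinarith)]
        nlinarith
  -- basic facts
  have hE0 : ∀ z, (0:ℝ) < ℓ z := hℓpos
  have hinj : Function.Injective ℓ := fun a b h => by rw [← hgl a, h, hgl b]
  have hp0 : ∀ i, p i 0 = 0 := by
    intro i
    have h := hhom i 2 two_pos 0
    rw [smul_zero] at h
    have h2 : (1:ℝ) < 2 ^ L := by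
      rw [Real.rpow_def_of_pos two_pos]
      calc (1:ℝ) = Real.exp 0 := Real.exp_zero.symm
        _ < _ := Real.exp_lt_exp.mpr (by positivity)
    have h3 : p i 0 * ((2:ℝ) ^ L - 1) = 0 := by linear_combination -h
    rcases mul_eq_zero.mp h3 with h4 | h4
    · exact h4
    · exact absurd h4 (by linarith)
  have h𝓛pos : ∀ x : EuclideanSpace ℝ (Fin k), 0 < 𝓛 x := by
    intro x
    rw [h𝓛]
    exact Finset.sum_pos (fun i _ => hℓpos _) (Finset.univ_nonempty_iff.mpr ⟨⟨0, hn⟩⟩)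
  have hα' : ∀ x : EuclideanSpace ℝ (Fin k), α x = g (𝓛 x) := by
    intro x
    rw [hα]
    beta_reduce
    have : 𝓛 x = ℓ (g (𝓛 x)) := (hg _ (h𝓛pos x)).symm
    conv_lhs => rw [this]
    exact Function.leftInverse_invFun hinj _
  have hαg : α = fun x => g (𝓛 x) := funext hα'
  -- norm of gradient = norm of fderiv
  have hgradnorm : ∀ (f : EuclideanSpace ℝ (Fin k) → ℝ) (x : EuclideanSpace ℝ (Fin k)), ‖gradient f x‖ = ‖fderiv ℝ f x‖ := by
    intro f x
    unfold gradient
    exact (InnerProductSpace.toDual ℝ (EuclideanSpace ℝ (Fin k))).symm.norm_map _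
  -- scaling of fderiv
  have hscale : ∀ i (c : ℝ), 0 < c → ∀ x : EuclideanSpace ℝ (Fin k), x ≠ 0 →
      fderiv ℝ (p i) (c • x) = (c ^ (L - 1)) • fderiv ℝ (p i) x := by
    intro i c hc x hx
    have hcx : c • x ≠ 0 := smul_ne_zero hc.ne' hx
    have hsm : HasFDerivAt (fun y : EuclideanSpace ℝ (Fin k) => c • y) (c • ContinuousLinearMap.id ℝ (EuclideanSpace ℝ (Fin k))) x := by
      simpa [Pi.smul_def] using ((c • ContinuousLinearMap.id ℝ (EuclideanSpace ℝ (Fin k))).hasFDerivAt (x := x))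
    have h1 : HasFDerivAt (fun y : EuclideanSpace ℝ (Fin k) => p i (c • y))
        ((fderiv ℝ (p i) (c • x)).comp (c • ContinuousLinearMap.id ℝ (EuclideanSpace ℝ (Fin k)))) x :=
      ((hpdiff i (c • x) hcx).hasFDerivAt).comp x hsm
    have h2 : HasFDerivAt (fun y : EuclideanSpace ℝ (Fin k) => c ^ L * p i y)
        ((c ^ L) • fderiv ℝ (p i) x) x :=
      ((hpdiff i x hx).hasFDerivAt).const_mul _
    have heq : (fun y : EuclideanSpace ℝ (Fin k) => p i (c • y)) = fun y : EuclideanSpace ℝ (Fin k) => c ^ L * p i y :=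
      funext (hhom i c hc)
    rw [heq] at h1
    have h3 := h1.unique h2
    have h4 : (fderiv ℝ (p i) (c • x)).comp (c • ContinuousLinearMap.id ℝ (EuclideanSpace ℝ (Fin k)))
        = c • fderiv ℝ (p i) (c • x) := by
      ext v
      simp [smul_eq_mul, mul_comm, map_smul]
    rw [h4] at h3
    have hc0 : c ≠ 0 := hc.ne'
    have h5 : fderiv ℝ (p i) (c • x) = (c⁻¹ * c ^ L) • fderiv ℝ (p i) x := by
      rw [mul_smul, ← h3, smul_smul, inv_mul_cancel₀ hc0, one_smul]
    rw [h5, Real.rpow_sub hc, Real.rpow_one]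
    ring_nf
  -- bound on the sphere
  have hMi : ∀ i, ∃ M : ℝ, ∀ x : EuclideanSpace ℝ (Fin k), ‖x‖ = 1 → ‖gradient (p i) x‖ ≤ M := by
    intro i
    have hcont : ContinuousOn (gradient (p i)) (Metric.sphere (0 : EuclideanSpace ℝ (Fin k)) 1) := by
      intro x hx
      have hx0 : x ≠ 0 := by
        rw [mem_sphere_zero_iff_norm] at hx
        intro h; rw [h, norm_zero] at hx; norm_num at hx
      obtain ⟨K, s, hs, hK⟩ := hplip i x hx0
      exact (hK.continuousOn.continuousAt hs).continuousWithinAt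
    obtain ⟨M, hM⟩ := (isCompact_sphere (0 : EuclideanSpace ℝ (Fin k)) 1).exists_bound_of_continuousOn hcont
    exact ⟨M, fun x hx => hM x (by rwa [mem_sphere_zero_iff_norm])⟩
  choose Mi hMi' using hMi
  set Mt : ℝ := ∑ i, max (Mi i) 0 with hMt
  have hMt0 : 0 ≤ Mt := Finset.sum_nonneg (fun i _ => le_max_right _ _)
  have hMtb : ∀ i, ∀ x : EuclideanSpace ℝ (Fin k), ‖x‖ = 1 → ‖gradient (p i) x‖ ≤ Mt := by
    intro i x hx
    calc ‖gradient (p i) x‖ ≤ Mi i := hMi' i x hx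
      _ ≤ max (Mi i) 0 := le_max_left _ _
      _ ≤ Mt := Finset.single_le_sum (fun j (_ : j ∈ Finset.univ) => le_max_right (Mi j) 0)
          (Finset.mem_univ i)
  -- bound on fderiv everywhere
  have hfb : ∀ i, ∀ x : EuclideanSpace ℝ (Fin k), x ≠ 0 → ‖fderiv ℝ (p i) x‖ ≤ Mt * ‖x‖ ^ (L - 1) := by
    intro i x hx
    have hr : (0:ℝ) < ‖x‖ := norm_pos_iff.mpr hx
    set u : EuclideanSpace ℝ (Fin k) := ‖x‖⁻¹ • x with hu
    have hu1 : ‖u‖ = 1 := by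
      rw [hu, norm_smul, norm_inv, norm_norm, inv_mul_cancel₀ hr.ne']
    have hune : u ≠ 0 := by
      intro h; rw [h, norm_zero] at hu1; norm_num at hu1
    have hxu : x = ‖x‖ • u := by
      rw [hu, smul_smul, mul_inv_cancel₀ hr.ne', one_smul]
    have h1 : fderiv ℝ (p i) x = (‖x‖ ^ (L - 1)) • fderiv ℝ (p i) u := by
      conv_lhs => rw [hxu]
      exact hscale i ‖x‖ hr u hune
    have e3 : ‖(‖x‖ ^ (L - 1)) • fderiv ℝ (p i) u‖ = |‖x‖ ^ (L - 1)| * ‖fderiv ℝ (p i) u‖ := by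
      rw [← Real.norm_eq_abs]; exact norm_smul _ _
    rw [h1, e3, abs_of_nonneg (Real.rpow_nonneg hr.le _)]
    rw [mul_comm Mt _]
    exact mul_le_mul_of_nonneg_left (by rw [← hgradnorm]; exact hMtb i u hu1)
      (Real.rpow_nonneg hr.le _)
  -- constants
  set NM : ℝ := (n : ℝ) * Mt with hNM
  have hNM0 : 0 ≤ NM := mul_nonneg (Nat.cast_nonneg n) hMt0
  refine ⟨(NM + 1) * (1 + L⁻¹), by positivity, ?_⟩
  intro W hW
  -- W ≠ 0
  have hWne : W ≠ 0 := by
    intro h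
    rw [h] at hW
    have : 𝓛 (0 : EuclideanSpace ℝ (Fin k)) = (n : ℝ) * ℓ 0 := by
      rw [h𝓛]
      simp only [hp0]
      rw [Finset.sum_const, Finset.card_univ, Fintype.card_fin, nsmul_eq_mul]
    rw [this] at hW
    have hn1 : (1:ℝ) ≤ (n:ℝ) := Nat.one_le_cast.mpr hn
    nlinarith [hℓpos 0]
  refine ⟨hWne, ?_⟩
  have hWpos : (0:ℝ) < ‖W‖ := norm_pos_iff.mpr hWne
  set t : ℝ := 𝓛 W with htdef
  have ht : 0 < t := h𝓛pos W
  -- derivative of 𝓛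
  set D : EuclideanSpace ℝ (Fin k) →L[ℝ] ℝ := ∑ i, ld (p i W) • fderiv ℝ (p i) W with hD
  have h𝓛D : HasFDerivAt 𝓛 D W := by
    rw [h𝓛, hD]
    exact HasFDerivAt.fun_sum (fun i _ =>
      (hld (p i W)).comp_hasFDerivAt W ((hpdiff i W hWne).hasFDerivAt))
  -- derivative of α
  have hαD : HasFDerivAt α (gd t • D) W := by
    rw [hαg]
    exact (hgd t ht).comp_hasFDerivAt W h𝓛D
  have hgradα : gradient α W = (InnerProductSpace.toDual ℝ (EuclideanSpace ℝ (Fin k))).symm (gd t • D) :=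
    (hasFDerivAt_iff_hasGradientAt.mp hαD).gradient
  have hgradαnorm : ‖gradient α W‖ = ‖gd t • D‖ := by
    rw [hgradα]
    exact (InnerProductSpace.toDual ℝ (EuclideanSpace ℝ (Fin k))).symm.norm_map _
  -- per-index loss bound: ℓ (p i W) ≤ t
  have hli : ∀ i, ℓ (p i W) ≤ t := by
    intro i
    rw [htdef, h𝓛]
    exact Finset.single_le_sum (fun j (_ : j ∈ Finset.univ) => (hℓpos (p j W)).le)
      (Finset.mem_univ i)
  -- the key norm bound
  have hkey : ‖gradient α W‖ ≤ NM * ‖W‖ ^ (L - 1) := by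
    rw [hgradαnorm]
    have e : ‖gd t • D‖ = |gd t| * ‖D‖ := by
      rw [← Real.norm_eq_abs]; exact norm_smul (gd t) D
    rw [e]
    calc |gd t| * ‖D‖ ≤ |gd t| * ∑ i, ‖ld (p i W) • fderiv ℝ (p i) W‖ :=
          mul_le_mul_of_nonneg_left (norm_sum_le _ _) (abs_nonneg _)
      _ = ∑ i, |gd t| * (|ld (p i W)| * ‖fderiv ℝ (p i) W‖) := by
          rw [Finset.mul_sum]
          refine Finset.sum_congr rfl (fun i _ => ?_)
          have e2 : ‖ld (p i W) • fderiv ℝ (p i) W‖ = |ld (p i W)| * ‖fderiv ℝ (p i) W‖ := by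
            rw [← Real.norm_eq_abs]; exact norm_smul _ _
          rw [e2]
      _ ≤ ∑ i, 1 * ‖fderiv ℝ (p i) W‖ := by
          apply Finset.sum_le_sum
          intro i _
          rw [← mul_assoc]
          exact mul_le_mul_of_nonneg_right (hbound t (p i W) ht (hli i)) (norm_nonneg _)
      _ = ∑ i, ‖fderiv ℝ (p i) W‖ := Finset.sum_congr rfl (fun i _ => one_mul _)
      _ ≤ ∑ _i : Fin n, Mt * ‖W‖ ^ (L - 1) :=
          Finset.sum_le_sum (fun i _ => hfb i W hWne)
      _ = NM * ‖W‖ ^ (L - 1) := by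
          rw [Finset.sum_const, Finset.card_univ, Fintype.card_fin, nsmul_eq_mul, hNM]
          ring
  constructor
  · -- β bound
    have hsplit : ‖W‖ ^ L = ‖W‖ * ‖W‖ ^ (L - 1) := by
      have h := Real.rpow_add hWpos 1 (L - 1)
      rw [Real.rpow_one] at h
      have h2 : 1 + (L - 1) = L := by ring
      rw [h2] at h
      exact h
    have h1 : ⟪W, gradient α W⟫ ≤ NM * ‖W‖ ^ L := by
      calc ⟪W, gradient α W⟫ ≤ ‖W‖ * ‖gradient α W‖ := real_inner_le_norm _ _
        _ ≤ ‖W‖ * (NM * ‖W‖ ^ (L - 1)) := mul_le_mul_of_nonneg_left hkey hWpos.le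
        _ = NM * ‖W‖ ^ L := by rw [hsplit]; ring
    rw [div_le_iff₀ hL]
    have hrp : (0:ℝ) ≤ ‖W‖ ^ L := Real.rpow_nonneg hWpos.le _
    have hLinv : L⁻¹ * L = 1 := inv_mul_cancel₀ hL.ne'
    calc ⟪W, gradient α W⟫ ≤ NM * ‖W‖ ^ L := h1
      _ ≤ (NM + 1) * (1 + L⁻¹) * ‖W‖ ^ L * L := by
          nlinarith [mul_nonneg hNM0 hrp, mul_nonneg hrp hL.le,
            mul_nonneg (mul_nonneg hNM0 hrp) hL.le]
  · -- gradient bound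
    have hrp : (0:ℝ) ≤ ‖W‖ ^ (L - 1) := Real.rpow_nonneg hWpos.le _
    calc ‖gradient α W‖ ≤ NM * ‖W‖ ^ (L - 1) := hkey
      _ ≤ (NM + 1) * (1 + L⁻¹) * ‖W‖ ^ (L - 1) := by
          apply mul_le_mul_of_nonneg_right _ hrp
          nlinarith [inv_pos.mpr hL]
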